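/- Let P^⊥ be the linear cellular automaton shift determined by Φ, with P = X_d − Φ and S(P) = {e_d} ∪ S(Φ). Define A = {x ∈ P^⊥ : x(0) = 1} and B = {x ∈ P^⊥ : x(0) = 0}. Then A and B are nonempty open subsets of P^⊥ of positive Haar measure, and for every n ∈ ℕ the set σ_{p^n e_d}⁻¹(A) ∩ ⋂_{m ∈ S(Φ)} σ_{p^n m}⁻¹(B) (intersection taken inside P^⊥) is empty, hence has μ-measure 0. In particular the sequence k ↦ μ(σ_{k e_d}⁻¹(A) ∩ ⋂_{m ∈ S(Φ)} σ_{k m}⁻¹(B)) does not converge to μ(A)·∏_{m ∈ S(Φ)} μ(B) as k → ∞, so the shape S(P) is a non-mixing set for P^⊥. -/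

import Mathlib

open MeasureTheory Filter Topology

namespace LCA

/-- The full shift `𝔽_p^{ℤ^d}`. -/
abbrev Full (p d : ℕ) : Type := (Fin d → ℤ) → ZMod p

/-- The shift action: `(σ_g x)(n) = x(n+g)`. -/
def shift (p d : ℕ) (g : Fin d → ℤ) (x : Full p d) : Full p d := fun n => x (n + g)

/-- `e_d = (0,…,0,1)`, the exponent of the "time" variable `X_d`. -/
def eLast (d : ℕ) : Fin d → ℤ := fun i => if (i : ℕ) = d - 1 then 1 else 0

/-- The linear cellular automaton shift `P^⊥` for `P = X_d − Φ`, as a set: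
all `x` with `x(n+e_d) = Σ_{m ∈ S(Φ)} Φ(m)·x(n+m)` for every `n`. -/
def Pperp (p d : ℕ) (Φ : (Fin d → ℤ) →₀ ZMod p) : Set (Full p d) :=
  {x | ∀ n : Fin d → ℤ, x (n + eLast d) = ∑ m ∈ Φ.support, Φ m * x (n + m)}

/-- `P^⊥` as a closed, shift-invariant subgroup of the full shift. -/
def PperpGroup (p d : ℕ) (Φ : (Fin d → ℤ) →₀ ZMod p) : AddSubgroup (Full p d) where
  carrier := Pperp p d Φ
  zero_mem' := by intro n; simp
  add_mem' := by
    intro x y hx hy n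
    simp only [Pi.add_apply, hx n, hy n, mul_add, Finset.sum_add_distrib]
  neg_mem' := by
    intro x hx n
    simp only [Pi.neg_apply, hx n, mul_neg, Finset.sum_neg_distrib, neg_inj]

lemma shift_mem_Pperp (p d : ℕ) (Φ : (Fin d → ℤ) →₀ ZMod p) (g : Fin d → ℤ)
    {x : Full p d} (hx : x ∈ Pperp p d Φ) : shift p d g x ∈ Pperp p d Φ := by
  intro n
  simpa [shift, add_right_comm] using hx (n + g)

/-- The shift action restricted to `P^⊥`. -/
def shiftSub (p d : ℕ) (Φ : (Fin d → ℤ) →₀ ZMod p) (g : Fin d → ℤ)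
    (x : PperpGroup p d Φ) : PperpGroup p d Φ :=
  ⟨shift p d g x.1, shift_mem_Pperp p d Φ g x.2⟩

end LCA

namespace LCA

/-- Borel σ-algebra on `P^⊥` (with the subspace topology). -/
noncomputable instance (p d : ℕ) (Φ : (Fin d → ℤ) →₀ ZMod p) :
    MeasurableSpace (PperpGroup p d Φ) := borel _

instance (p d : ℕ) (Φ : (Fin d → ℤ) →₀ ZMod p) : BorelSpace (PperpGroup p d Φ) := ⟨rfl⟩

end LCA

open LCA MeasureTheory Filter Topology

/- ========================= auxiliary machinery ========================= -/

namespace LCAaux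
open LCA Finsupp

/-! ### Action of the Laurent polynomial ring on the full shift -/

variable {p d : ℕ}

abbrev Alg (p d : ℕ) := AddMonoidAlgebra (ZMod p) (Fin d → ℤ)

noncomputable def act (Q : Alg p d) (x : Full p d) : Full p d :=
  fun n => Q.coeff.sum fun g c => c * x (n + g)

def toAlg (Φ : (Fin d → ℤ) →₀ ZMod p) : Alg p d := AddMonoidAlgebra.ofCoeff Φ

lemma act_single (g : Fin d → ℤ) (c : ZMod p) (x : Full p d) :
    act (AddMonoidAlgebra.single g c) x = fun n => c * x (n + g) := by
  funext n
  simp [act, AddMonoidAlgebra.coeff_single, Finsupp.sum_single_index]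

lemma act_zero (x : Full p d) : act (0 : Alg p d) x = 0 := by
  funext n; simp [act]

lemma act_add (Q R : Alg p d) (x : Full p d) :
    act (Q + R) x = act Q x + act R x := by
  funext n
  simp only [act, Pi.add_apply, AddMonoidAlgebra.coeff_add]
  exact Finsupp.sum_add_index (by simp) (by intros; rw [add_mul])

lemma act_x_add (Q : Alg p d) (x y : Full p d) :
    act Q (x + y) = act Q x + act Q y := by
  funext n
  simp [act, Finsupp.sum, mul_add, Finset.sum_add_distrib]

lemma act_x_zero (Q : Alg p d) : act Q (0 : Full p d) = 0 := by
  funext n; simp [act, Finsupp.sum]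

lemma act_mul (Q R : Alg p d) (x : Full p d) :
    act (Q * R) x = act Q (act R x) := by
  induction Q using AddMonoidAlgebra.induction_linear with
  | zero => simp [act_zero, zero_mul]
  | add Q1 Q2 h1 h2 => rw [add_mul, act_add, act_add, h1, h2]
  | single a b =>
    induction R using AddMonoidAlgebra.induction_linear with
    | zero => rw [mul_zero, act_zero, act_x_zero]
    | add R1 R2 h1 h2 => rw [mul_add, act_add, act_add, h1, h2, act_x_add]
    | single c e =>
      rw [AddMonoidAlgebra.single_mul_single, act_single, act_single, act_single]
      funext n
      simp [mul_assoc, add_assoc]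

lemma act_neg (Q : Alg p d) (x : Full p d) : act (-Q) x = -act Q x := by
  have h := act_add Q (-Q) x
  rw [add_neg_cancel, act_zero] at h
  funext n
  have := congrFun h n
  simp only [Pi.add_apply, Pi.zero_apply] at this
  simp only [Pi.neg_apply]
  linear_combination -this

lemma act_sub (Q R : Alg p d) (x : Full p d) : act (Q - R) x = act Q x - act R x := by
  rw [sub_eq_add_neg, act_add, act_neg, sub_eq_add_neg]

lemma act_sum {ι : Type*} (s : Finset ι) (f : ι → Alg p d) (x : Full p d) :
    act (∑ i ∈ s, f i) x = ∑ i ∈ s, act (f i) x := by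
  classical
  induction s using Finset.induction_on with
  | empty => simp [act_zero]
  | insert _ _ h ih => rw [Finset.sum_insert h, Finset.sum_insert h, act_add, ih]

instance charP_alg [Fact p.Prime] : CharP (Alg p d) p :=
  charP_of_injective_ringHom (f := AddMonoidAlgebra.singleZeroRingHom)
    (fun a b h => by
      simpa using congrArg (fun q : Alg p d => q.coeff 0) h) p

lemma pow_P [Fact p.Prime] (Φ : (Fin d → ℤ) →₀ ZMod p) (e : Fin d → ℤ) (k : ℕ) :
    ((AddMonoidAlgebra.single e 1 - toAlg Φ) ^ (p ^ k) : Alg p d)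
      = AddMonoidAlgebra.single ((p ^ k) • e) 1
        - ∑ m ∈ Φ.support, AddMonoidAlgebra.single ((p ^ k) • m) (Φ m) := by
  rw [sub_pow_char_pow, AddMonoidAlgebra.single_pow, one_pow]
  congr 1
  have hΦ : toAlg (p := p) (d := d) Φ
      = ∑ m ∈ Φ.support, AddMonoidAlgebra.single m (Φ m) := by
    conv_lhs => rw [← Finsupp.sum_single Φ]
    exact AddMonoidAlgebra.ofCoeff_sum _ _
  rw [hΦ, sum_pow_char_pow]
  refine Finset.sum_congr rfl fun m _ => ?_
  rw [AddMonoidAlgebra.single_pow, ZMod.pow_card_pow]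

lemma act_toAlg (Φ : (Fin d → ℤ) →₀ ZMod p) (x : Full p d) (n : Fin d → ℤ) :
    act (toAlg Φ) x n = ∑ m ∈ Φ.support, Φ m * x (n + m) := rfl

/-- The key Frobenius identity: any point of `P^⊥` also satisfies the automaton relation
with all displacements multiplied by `p ^ k`. -/
lemma key [Fact p.Prime] (Φ : (Fin d → ℤ) →₀ ZMod p) {x : Full p d}
    (hx : x ∈ Pperp p d Φ) (k : ℕ) (n : Fin d → ℤ) :
    x (n + (p ^ k) • eLast d) = ∑ m ∈ Φ.support, Φ m * x (n + (p ^ k) • m) := by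
  have hP : act (AddMonoidAlgebra.single (eLast d) 1 - toAlg Φ) x = 0 := by
    rw [act_sub, act_single]
    funext n'
    simp only [Pi.sub_apply, Pi.zero_apply, one_mul, act_toAlg]
    rw [hx n', sub_self]
  have hq : act ((AddMonoidAlgebra.single (eLast d) 1 - toAlg Φ) ^ (p ^ k)) x = 0 := by
    obtain ⟨j, hj⟩ : ∃ j, p ^ k = j + 1 :=
      ⟨p ^ k - 1, by have := Nat.one_le_pow k p (Fact.out (p := p.Prime)).pos; omega⟩
    rw [hj, pow_succ, act_mul, hP, act_x_zero]
  rw [pow_P, act_sub, act_single, act_sum] at hq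
  have h0 := congrFun hq n
  simp only [Pi.sub_apply, Pi.zero_apply, one_mul, Finset.sum_apply] at h0
  have h2 : ∀ m ∈ Φ.support,
      act (AddMonoidAlgebra.single ((p ^ k) • m) (Φ m)) x n
        = Φ m * x (n + (p ^ k) • m) := by
    intro m _
    rw [act_single]
  rw [Finset.sum_congr rfl h2] at h0
  linear_combination h0

/-! ### The two-sided recursion producing a point of `P^⊥` with `x 0 = 1` -/

section Rec
variable {ι : Type} [DecidableEq ι]

def fUp (S : Finset ι) (co : ι → ZMod p) (a : ι → ℤ) (b : ℤ) (m₀ : ι)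
    (hm₀ : m₀ ∈ S) (hb : ∀ m ∈ S, a m < b) : ℕ → ZMod p
  | t =>
    if _h : t < (b - a m₀).toNat then (if t = 0 then 1 else 0)
    else ∑ m ∈ S.attach, co m.1 * fUp S co a b m₀ hm₀ hb (t - (b - a m.1).toNat)
termination_by t => t
decreasing_by
  have h1 := hb m.1 m.2
  have h2 := hb m₀ hm₀
  omega

def gDown (S : Finset ι) (co : ι → ZMod p) (a : ι → ℤ) (b : ℤ) (m₀ : ι)
    (hm₀ : m₀ ∈ S) (hb : ∀ m ∈ S, a m < b)
    (hstrict : ∀ m ∈ S, m ≠ m₀ → a m₀ < a m) : ℕ → ZMod p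
  | j =>
    (co m₀)⁻¹ *
      ((if _h : (b - a m₀).toNat ≤ j then
          gDown S co a b m₀ hm₀ hb hstrict (j - (b - a m₀).toNat)
        else fUp S co a b m₀ hm₀ hb ((b - a m₀).toNat - j - 1)) -
       ∑ m ∈ (S.erase m₀).attach, co m.1 *
         (if _h : (a m.1 - a m₀).toNat ≤ j then
            gDown S co a b m₀ hm₀ hb hstrict (j - (a m.1 - a m₀).toNat)
          else fUp S co a b m₀ hm₀ hb ((a m.1 - a m₀).toNat - j - 1)))
termination_by j => j
decreasing_by
  · have := hb m₀ hm₀; omega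
  · have hm := Finset.mem_erase.mp m.2
    have := hstrict m.1 hm.2 hm.1
    omega

variable (S : Finset ι) (co : ι → ZMod p) (a : ι → ℤ) (b : ℤ) (m₀ : ι)
    (hm₀ : m₀ ∈ S) (hb : ∀ m ∈ S, a m < b)
    (hstrict : ∀ m ∈ S, m ≠ m₀ → a m₀ < a m)

/-- The two-sided sequence solving the one-dimensional recurrence. -/
noncomputable def yy : ℤ → ZMod p := fun t =>
  if 0 ≤ t then fUp S co a b m₀ hm₀ hb t.toNat
  else gDown S co a b m₀ hm₀ hb hstrict (-1 - t).toNat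

lemma yy_zero : yy S co a b m₀ hm₀ hb hstrict 0 = 1 := by
  have hK : 1 ≤ (b - a m₀).toNat := by have := hb m₀ hm₀; omega
  rw [yy]
  simp only [le_refl, if_pos]
  rw [fUp]
  simp [hK]
  omega

lemma yy_neg (t : ℤ) (ht : t < 0) :
    yy S co a b m₀ hm₀ hb hstrict t
      = gDown S co a b m₀ hm₀ hb hstrict (-1 - t).toNat := by
  rw [yy, if_neg (by omega)]

lemma yy_nonneg (t : ℤ) (ht : 0 ≤ t) :
    yy S co a b m₀ hm₀ hb hstrict t = fUp S co a b m₀ hm₀ hb t.toNat := by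
  rw [yy, if_pos ht]

lemma ite_eq_yy (s : ℤ) (hs : s + a m₀ < 0) (c : ℕ) (hc : 1 ≤ c) :
    (if (c : ℕ) ≤ (-1 - (s + a m₀)).toNat then
        gDown S co a b m₀ hm₀ hb hstrict ((-1 - (s + a m₀)).toNat - c)
      else fUp S co a b m₀ hm₀ hb (c - (-1 - (s + a m₀)).toNat - 1))
      = yy S co a b m₀ hm₀ hb hstrict (s + a m₀ + c) := by
  by_cases h : (c : ℕ) ≤ (-1 - (s + a m₀)).toNat
  · rw [if_pos h, yy_neg _ _ _ _ _ _ _ _ _ (by omega)]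
    congr 1
    omega
  · rw [if_neg h, yy_nonneg _ _ _ _ _ _ _ _ _ (by omega)]
    congr 1
    omega

lemma yy_rec [Fact p.Prime] (hco : co m₀ ≠ 0) (s : ℤ) :
    yy S co a b m₀ hm₀ hb hstrict (s + b)
      = ∑ m ∈ S, co m * yy S co a b m₀ hm₀ hb hstrict (s + a m) := by
  have hbm₀ := hb m₀ hm₀
  have hmin : ∀ m ∈ S, a m₀ ≤ a m := by
    intro m hm
    by_cases hmm : m = m₀
    · subst hmm; exact le_refl _
    · exact le_of_lt (hstrict m hm hmm)
  by_cases hs : 0 ≤ s + a m₀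
  · rw [yy_nonneg _ _ _ _ _ _ _ _ _ (by omega)]
    rw [fUp, dif_neg (by omega)]
    rw [Finset.sum_attach S
      (fun m => co m * fUp S co a b m₀ hm₀ hb ((s + b).toNat - (b - a m).toNat))]
    refine Finset.sum_congr rfl fun m hm => ?_
    have h1 := hb m hm
    have h2 := hmin m hm
    rw [yy_nonneg _ _ _ _ _ _ _ _ _ (by omega)]
    congr 2
    omega
  · push_neg at hs
    set j := (-1 - (s + a m₀)).toNat with hj
    have hy₀ : yy S co a b m₀ hm₀ hb hstrict (s + a m₀)
        = gDown S co a b m₀ hm₀ hb hstrict j := yy_neg _ _ _ _ _ _ _ _ _ hs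
    have e1 : (if _h : (b - a m₀).toNat ≤ j then
          gDown S co a b m₀ hm₀ hb hstrict (j - (b - a m₀).toNat)
        else fUp S co a b m₀ hm₀ hb ((b - a m₀).toNat - j - 1))
        = yy S co a b m₀ hm₀ hb hstrict (s + b) := by
      rw [dite_eq_ite, hj, ite_eq_yy S co a b m₀ hm₀ hb hstrict s hs _ (by omega)]
      congr 1
      omega
    have e2 : ∑ m ∈ (S.erase m₀).attach, co m.1 *
          (if _h : (a m.1 - a m₀).toNat ≤ j then
            gDown S co a b m₀ hm₀ hb hstrict (j - (a m.1 - a m₀).toNat)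
          else fUp S co a b m₀ hm₀ hb ((a m.1 - a m₀).toNat - j - 1))
        = ∑ m ∈ S.erase m₀, co m * yy S co a b m₀ hm₀ hb hstrict (s + a m) := by
      rw [← Finset.sum_attach (S.erase m₀)
        (fun m => co m * yy S co a b m₀ hm₀ hb hstrict (s + a m))]
      refine Finset.sum_congr rfl fun m _ => ?_
      have hme := Finset.mem_erase.mp m.2
      have hstr := hstrict m.1 hme.2 hme.1
      rw [dite_eq_ite, hj, ite_eq_yy S co a b m₀ hm₀ hb hstrict s hs _ (by omega)]
      congr 2
      omega
    have hgd : gDown S co a b m₀ hm₀ hb hstrict j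
        = (co m₀)⁻¹ *
          (yy S co a b m₀ hm₀ hb hstrict (s + b) -
           ∑ m ∈ S.erase m₀, co m * yy S co a b m₀ hm₀ hb hstrict (s + a m)) := by
      rw [gDown, e1, e2]
    have hmul : co m₀ * yy S co a b m₀ hm₀ hb hstrict (s + a m₀)
        = yy S co a b m₀ hm₀ hb hstrict (s + b) -
          ∑ m ∈ S.erase m₀, co m * yy S co a b m₀ hm₀ hb hstrict (s + a m) := by
      rw [hy₀, hgd, ← mul_assoc, mul_inv_cancel₀ hco, one_mul]
    rw [← Finset.add_sum_erase S
      (fun m => co m * yy S co a b m₀ hm₀ hb hstrict (s + a m)) hm₀]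
    linear_combination -hmul

end Rec

/-! ### Separating linear functionals on `ℤ^d` -/

def dot {d : ℕ} (w v : Fin d → ℤ) : ℤ := ∑ i, w i * v i

lemma dot_add {d : ℕ} (w u v : Fin d → ℤ) : dot w (u + v) = dot w u + dot w v := by
  simp [dot, mul_add, Finset.sum_add_distrib]

lemma dot_sub {d : ℕ} (w u v : Fin d → ℤ) : dot w (u - v) = dot w u - dot w v := by
  simp [dot, mul_sub, Finset.sum_sub_distrib]

lemma dot_zero {d : ℕ} (w : Fin d → ℤ) : dot w 0 = 0 := by simp [dot]

lemma exists_sep {d : ℕ} (S : Finset (Fin d → ℤ)) :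
    ∃ w : Fin d → ℤ, ∀ v ∈ S, v ≠ 0 → dot w v ≠ 0 := by
  classical
  induction S using Finset.induction_on with
  | empty => exact ⟨0, by simp⟩
  | @insert v S hv ih =>
    obtain ⟨w, hw⟩ := ih
    by_cases hv0 : v = 0
    · refine ⟨w, fun v' hv' h0 => ?_⟩
      rcases Finset.mem_insert.mp hv' with rfl | h
      · exact absurd hv0 h0
      · exact hw v' h h0
    · obtain ⟨i, hi⟩ : ∃ i, v i ≠ 0 := by
        by_contra h
        push_neg at h
        exact hv0 (funext h)
      obtain ⟨k, hk⟩ := Infinite.exists_notMem_finset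
        ((insert v S).image (fun v' => -(dot w v') / (v' i)))
      refine ⟨fun j => w j + if j = i then k else 0, ?_⟩
      intro v' hv' hv'0
      have hdot : dot (fun j => w j + if j = i then k else 0) v'
          = dot w v' + k * v' i := by
        simp only [dot, add_mul, Finset.sum_add_distrib, ite_mul, zero_mul]
        rw [Finset.sum_ite_eq' Finset.univ i (fun j => k * v' j)]
        simp
      rw [hdot]
      by_cases hvi : v' i = 0
      · rw [hvi, mul_zero, add_zero]
        rcases Finset.mem_insert.mp hv' with rfl | hS
        · exact absurd hvi hi
        · exact hw v' hS hv'0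
      · intro h0
        apply hk
        have hkk : k = -(dot w v') / (v' i) := by
          have h1 : k * v' i = -(dot w v') := by linarith
          rw [← h1, Int.mul_ediv_cancel k hvi]
        rw [hkk]
        exact Finset.mem_image.mpr ⟨v', hv', rfl⟩

/-! ### A point of `P^⊥` with value `1` at the origin -/

lemma exists_mem_one (p d : ℕ) [Fact p.Prime] (hd : 1 < d)
    (Φ : (Fin d → ℤ) →₀ ZMod p)
    (hΦsupp : ∀ m ∈ Φ.support, m ⟨d - 1, by omega⟩ = 0)
    (hΦ2 : 2 ≤ Φ.support.card) :
    ∃ x ∈ Pperp p d Φ, x 0 = 1 := by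
  classical
  set S := Φ.support with hS
  have hSne : S.Nonempty := Finset.card_pos.mp (by omega)
  obtain ⟨w0, hw0⟩ := exists_sep ((S ×ˢ S).image (fun q => q.1 - q.2))
  have hinj : ∀ m ∈ S, ∀ m' ∈ S, dot w0 m = dot w0 m' → m = m' := by
    intro m hm m' hm' heq
    by_contra hne
    have hmem : m - m' ∈ (S ×ˢ S).image (fun q => q.1 - q.2) :=
      Finset.mem_image.mpr ⟨(m, m'), Finset.mem_product.mpr ⟨hm, hm'⟩, rfl⟩
    have hz : dot w0 (m - m') ≠ 0 := hw0 _ hmem (sub_ne_zero.mpr hne)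
    rw [dot_sub, heq, sub_self] at hz
    exact hz rfl
  set idx : Fin d := ⟨d - 1, by omega⟩ with hidx
  set M := S.sup' hSne (fun m => dot w0 m) with hM
  set w : Fin d → ℤ := Function.update w0 idx (M + 1) with hw
  have hagree : ∀ m ∈ S, dot w m = dot w0 m := by
    intro m hm
    refine Finset.sum_congr rfl fun j _ => ?_
    by_cases hj : j = idx
    · subst hj
      rw [hΦsupp m hm, mul_zero, mul_zero]
    · rw [hw, Function.update_of_ne hj]
  have hbval : dot w (eLast d) = M + 1 := by
    rw [dot, Finset.sum_eq_single idx]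
    · rw [hw, Function.update_self, eLast]
      simp [hidx]
    · intro j _ hj
      have hne : (j : ℕ) ≠ d - 1 := by
        intro hc
        exact hj (Fin.ext (by simp [hidx, hc]))
      simp [eLast, hne]
    · intro h
      exact absurd (Finset.mem_univ idx) h
  have hb : ∀ m ∈ S, dot w m < dot w (eLast d) := by
    intro m hm
    rw [hbval, hagree m hm]
    exact lt_of_le_of_lt (Finset.le_sup' (fun m => dot w0 m) hm) (by omega)
  obtain ⟨m₀, hm₀S, hm₀min⟩ := S.exists_min_image (fun m => dot w0 m) hSne
  have hstrict : ∀ m ∈ S, m ≠ m₀ → dot w m₀ < dot w m := by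
    intro m hm hne
    rw [hagree m hm, hagree m₀ hm₀S]
    rcases lt_or_eq_of_le (hm₀min m hm) with h | h
    · exact h
    · exact absurd (hinj m₀ hm₀S m hm h) (Ne.symm hne)
  have hco : Φ m₀ ≠ 0 := Finsupp.mem_support_iff.mp hm₀S
  set b := dot w (eLast d) with hbdef
  set y := yy S (fun m => Φ m) (fun m => dot w m) b m₀ hm₀S hb hstrict with hy
  refine ⟨fun n => y (dot w n), ?_, ?_⟩
  · intro n
    have hrec := yy_rec S (fun m => Φ m) (fun m => dot w m) b m₀ hm₀S hb hstrict
      hco (dot w n)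
    simp only []
    rw [dot_add, ← hbdef, hy, hrec]
    refine Finset.sum_congr rfl fun m _ => ?_
    rw [dot_add]
  · show y (dot w 0) = 1
    rw [dot_zero, hy, yy_zero]

/-! ### Topological facts about `P^⊥` -/

lemma isClosed_Pperp (p d : ℕ) [Fact p.Prime] (Φ : (Fin d → ℤ) →₀ ZMod p) :
    IsClosed (Pperp p d Φ) := by
  have : Pperp p d Φ
      = ⋂ n : Fin d → ℤ,
          {x : Full p d | x (n + eLast d) = ∑ m ∈ Φ.support, Φ m * x (n + m)} := by
    ext x
    simp [Pperp, Set.mem_iInter]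
  rw [this]
  refine isClosed_iInter fun n => isClosed_eq (continuous_apply _) ?_
  exact continuous_finset_sum _ fun m _ => continuous_const.mul (continuous_apply (n + m))

end LCAaux

/-- Let `P^⊥` be the linear cellular automaton shift determined by `Φ`,
`A = {x ∈ P^⊥ : x(0) = 1}` and `B = {x ∈ P^⊥ : x(0) = 0}`.  Then `A` and `B` are nonempty
open subsets of `P^⊥` of positive Haar measure, for every `n ∈ ℕ` the set
`σ_{p^n e_d}⁻¹(A) ∩ ⋂_{m ∈ S(Φ)} σ_{p^n m}⁻¹(B)` is empty, hence of measure `0`, and the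
sequence `k ↦ μ(σ_{k e_d}⁻¹(A) ∩ ⋂_{m ∈ S(Φ)} σ_{k m}⁻¹(B))` does not converge to
`μ(A)·∏_{m ∈ S(Φ)} μ(B)`; so the shape `S(P) = {e_d} ∪ S(Φ)` is a non-mixing set. -/
theorem shape_is_nonmixing (p d : ℕ) [Fact p.Prime] (hd : 2 ≤ d)
    (Φ : (Fin d → ℤ) →₀ ZMod p)
    (hΦsupp : ∀ m ∈ Φ.support, m ⟨d - 1, by omega⟩ = 0)
    (hΦ2 : 2 ≤ Φ.support.card)
    (μ : Measure (PperpGroup p d Φ)) [IsProbabilityMeasure μ] [μ.IsAddHaarMeasure]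
    (A B : Set (PperpGroup p d Φ))
    (hA : A = {x : PperpGroup p d Φ | (x : Full p d) 0 = 1})
    (hB : B = {x : PperpGroup p d Φ | (x : Full p d) 0 = 0}) :
    A.Nonempty ∧ B.Nonempty ∧ IsOpen A ∧ IsOpen B ∧ 0 < μ A ∧ 0 < μ B ∧
    (∀ n : ℕ,
      (shiftSub p d Φ ((p ^ n : ℕ) • eLast d) ⁻¹' A ∩
          ⋂ m ∈ Φ.support, shiftSub p d Φ ((p ^ n : ℕ) • m) ⁻¹' B) = ∅ ∧
      μ (shiftSub p d Φ ((p ^ n : ℕ) • eLast d) ⁻¹' A ∩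
          ⋂ m ∈ Φ.support, shiftSub p d Φ ((p ^ n : ℕ) • m) ⁻¹' B) = 0) ∧
    ¬ Tendsto
        (fun k : ℕ =>
          μ (shiftSub p d Φ (k • eLast d) ⁻¹' A ∩
              ⋂ m ∈ Φ.support, shiftSub p d Φ (k • m) ⁻¹' B))
        atTop (nhds (μ A * ∏ _m ∈ Φ.support, μ B)) := by
  classical
  haveI hp1 : Fact (1 < p) := ⟨(Fact.out (p := p.Prime)).one_lt⟩
  haveI : NeZero p := ⟨(Fact.out (p := p.Prime)).ne_zero⟩
  -- compactness of P^⊥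
  haveI hcs : CompactSpace (PperpGroup p d Φ) := by
    have hc : IsCompact (Pperp p d Φ) := (LCAaux.isClosed_Pperp p d Φ).isCompact
    exact isCompact_iff_compactSpace.mp hc
  haveI : μ.IsOpenPosMeasure :=
    MeasureTheory.isOpenPosMeasure_of_addLeftInvariant_of_compact Set.univ
      isCompact_univ (by simp)
  -- nonemptiness
  have hA_ne : A.Nonempty := by
    obtain ⟨x, hx, h1⟩ := LCAaux.exists_mem_one p d hd Φ hΦsupp hΦ2
    exact ⟨⟨x, hx⟩, by rw [hA]; exact h1⟩
  have hB_ne : B.Nonempty := by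
    refine ⟨0, ?_⟩
    rw [hB]
    show ((0 : PperpGroup p d Φ) : Full p d) 0 = 0
    rfl
  -- openness
  have hAopen : IsOpen A := by
    rw [hA]
    exact ((continuous_apply (0 : Fin d → ℤ)).comp continuous_subtype_val).isOpen_preimage
      {1} (isOpen_discrete _)
  have hBopen : IsOpen B := by
    rw [hB]
    exact ((continuous_apply (0 : Fin d → ℤ)).comp continuous_subtype_val).isOpen_preimage
      {0} (isOpen_discrete _)
  -- positive measure
  have hApos : 0 < μ A := hAopen.measure_pos μ hA_ne
  have hBpos : 0 < μ B := hBopen.measure_pos μ hB_ne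
  -- emptiness of the correlation sets along powers of p
  have hempty : ∀ n : ℕ, (shiftSub p d Φ ((p ^ n : ℕ) • eLast d) ⁻¹' A ∩
      ⋂ m ∈ Φ.support, shiftSub p d Φ ((p ^ n : ℕ) • m) ⁻¹' B) = ∅ := by
    intro n
    rw [Set.eq_empty_iff_forall_notMem]
    rintro x ⟨hxA, hxB⟩
    rw [Set.mem_iInter₂] at hxB
    have h1 : (x : Full p d) ((0 : Fin d → ℤ) + (p ^ n : ℕ) • eLast d) = 1 := by
      have hm := hxA
      rw [Set.mem_preimage, hA, Set.mem_setOf_eq] at hm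
      exact hm
    have h0 : ∀ m ∈ Φ.support,
        (x : Full p d) ((0 : Fin d → ℤ) + (p ^ n : ℕ) • m) = 0 := by
      intro m hm
      have hx := hxB m hm
      rw [Set.mem_preimage, hB, Set.mem_setOf_eq] at hx
      exact hx
    have hkey := LCAaux.key Φ x.2 n (0 : Fin d → ℤ)
    rw [h1, Finset.sum_congr rfl (fun m hm => by rw [h0 m hm, mul_zero])] at hkey
    rw [Finset.sum_const_zero] at hkey
    exact one_ne_zero hkey
  have hmeas : ∀ n : ℕ, μ (shiftSub p d Φ ((p ^ n : ℕ) • eLast d) ⁻¹' A ∩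
      ⋂ m ∈ Φ.support, shiftSub p d Φ ((p ^ n : ℕ) • m) ⁻¹' B) = 0 := by
    intro n
    rw [hempty n]
    exact measure_empty
  refine ⟨hA_ne, hB_ne, hAopen, hBopen, hApos, hBpos, fun n => ⟨hempty n, hmeas n⟩, ?_⟩
  -- non-mixing
  intro hT
  have hcomp := hT.comp (tendsto_pow_atTop_atTop_of_one_lt (α := ℕ) hp1.out)
  have hconst : Tendsto (fun _ : ℕ => (0 : ENNReal)) atTop
      (nhds (μ A * ∏ _m ∈ Φ.support, μ B)) := by
    refine hcomp.congr fun n => ?_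
    show μ _ = 0
    exact hmeas n
  have hL := tendsto_nhds_unique hconst tendsto_const_nhds
  have hprod : (∏ _m ∈ Φ.support, μ B) ≠ 0 :=
    Finset.prod_ne_zero_iff.mpr fun m _ => hBpos.ne'
  exact mul_ne_zero hApos.ne' hprod hL
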